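/- If G is a characteristically simple non-abelian group, then Aut(G) is a complete group: Z(Aut(G)) = 1 and every automorphism of Aut(G) is inner. -/

import Mathlib

/-- If `G` is a characteristically simple non-abelian group, then `Aut G` is a
complete group: it has trivial center and all of its automorphisms are inner. -/
theorem stmt_11 (G : Type) [Group G]
    (hcs : ∀ H : Subgroup G, H.Characteristic → H = ⊥ ∨ H = ⊤)
    (hna : ∃ a b : G, a * b ≠ b * a) :
    Subgroup.center (MulAut G) = ⊥ ∧
    ∀ φ : MulAut (MulAut G), ∃ α : MulAut G, φ = MulAut.conj α := by
  classical
  set c : G →* MulAut G := MulAut.conj with hc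
  have hconj : ∀ (α : MulAut G) (g : G), α * c g * α⁻¹ = c (α g) := by
    intro α g
    ext x
    show α ((c g) (α⁻¹ x)) = (c (α g)) x
    simp [hc, MulAut.conj_apply, map_mul]
  -- the center of G is trivial
  have hZ : Subgroup.center G = ⊥ := by
    rcases hcs (Subgroup.center G) inferInstance with h | h
    · exact h
    · exfalso
      obtain ⟨a, b, hab⟩ := hna
      have : a ∈ Subgroup.center G := h ▸ Subgroup.mem_top a
      exact hab ((Subgroup.mem_center_iff.mp this b).symm)
  -- conj is injective
  have cinj : Function.Injective c := by
    rw [injective_iff_map_eq_one]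
    intro g hg
    have : g ∈ Subgroup.center G := by
      rw [Subgroup.mem_center_iff]
      intro x
      have h := DFunLike.congr_fun hg x
      simp [hc, MulAut.conj_apply] at h
      conv_lhs => rw [← h]
      group
    rw [hZ, Subgroup.mem_bot] at this
    rw [this]
  -- anything commuting with all conjugations is trivial
  have hcent : ∀ α : MulAut G, (∀ g : G, α * c g = c g * α) → α = 1 := by
    intro α hα
    ext x
    have h1 : α * c x * α⁻¹ = c x := by
      rw [hα x]; group
    have h2 : c (α x) = c x := by rw [← hconj α x]; exact h1
    exact cinj h2
  have hInnNormal : (c.range).Normal := by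
    constructor
    rintro - ⟨g, rfl⟩ α
    exact ⟨α g, (hconj α g).symm⟩
  -- a normal subgroup of Aut G contained in Inn is ⊥ or Inn
  have hkey : ∀ N : Subgroup (MulAut G), N.Normal → N ≤ c.range →
      N = ⊥ ∨ N = c.range := by
    intro N hN hNle
    have hchar : (N.comap c).Characteristic := by
      rw [Subgroup.characteristic_iff_comap_eq]
      intro σ
      ext g
      simp only [Subgroup.mem_comap, MulEquiv.coe_toMonoidHom]
      constructor
      · intro h
        have h2 := hN.conj_mem _ h (σ⁻¹ : MulAut G)
        rwa [show (σ⁻¹ : MulAut G) * c (σ g) * (σ⁻¹ : MulAut G)⁻¹ = c g by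
          rw [hconj (σ⁻¹ : MulAut G) (σ g)]
          congr 1
          simp] at h2
      · intro h
        have h2 := hN.conj_mem _ h (σ : MulAut G)
        rwa [hconj (σ : MulAut G) g] at h2
    rcases hcs _ hchar with h | h
    · left
      rw [eq_bot_iff]
      intro n hn
      obtain ⟨g, rfl⟩ := hNle hn
      have hg : g ∈ N.comap c := hn
      rw [h, Subgroup.mem_bot] at hg
      simp [hg, Subgroup.mem_bot]
    · right
      apply le_antisymm hNle
      rintro - ⟨g, rfl⟩
      exact (h ▸ Subgroup.mem_top g : g ∈ N.comap c)
  -- Inn ≠ ⊥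
  have hInnne : c.range ≠ ⊥ := by
    obtain ⟨a, b, hab⟩ := hna
    intro h
    have ha : c a ∈ c.range := ⟨a, rfl⟩
    rw [h, Subgroup.mem_bot] at ha
    have : a = 1 := cinj (by simp [ha])
    subst this
    simp at hab
  constructor
  · -- trivial center
    rw [eq_bot_iff]
    intro α hα
    rw [Subgroup.mem_bot]
    exact hcent α fun g => (Subgroup.mem_center_iff.mp hα (c g)).symm
  · -- all automorphisms inner
    have hstab : ∀ φ : MulAut (MulAut G), c.range ≤ (c.range).map φ.toMonoidHom := by
      intro φ
      set M : Subgroup (MulAut G) := (c.range).map φ.toMonoidHom with hM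
      have hMnormal : M.Normal := hInnNormal.map _ φ.surjective
      set N : Subgroup (MulAut G) := M ⊓ c.range with hN
      have hNnormal : N.Normal := by
        constructor
        intro n hn g
        exact ⟨hMnormal.conj_mem _ hn.1 g, hInnNormal.conj_mem _ hn.2 g⟩
      rcases hkey N hNnormal inf_le_right with h | h
      · exfalso
        have hMbot : M = ⊥ := by
          rw [eq_bot_iff]
          intro m hm
          rw [Subgroup.mem_bot]
          apply hcent
          intro g
          have hcomm : m * c g * m⁻¹ * (c g)⁻¹ ∈ N := by
            constructor
            · have h1 : c g * m⁻¹ * (c g)⁻¹ ∈ M := hMnormal.conj_mem _ (inv_mem hm) _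
              have h2 : m * (c g * m⁻¹ * (c g)⁻¹) ∈ M := mul_mem hm h1
              convert h2 using 1
              simp [mul_assoc]
            · have h1 : m * c g * m⁻¹ ∈ c.range := hInnNormal.conj_mem _ ⟨g, rfl⟩ m
              have h2 : (c g)⁻¹ ∈ c.range := ⟨g⁻¹, by simp⟩
              exact mul_mem h1 h2
          rw [h, Subgroup.mem_bot] at hcomm
          have := congrArg (· * (c g * m)) hcomm
          simpa [mul_assoc] using this
        apply hInnne
        rw [eq_bot_iff]
        intro x hx
        have hx2 : φ x ∈ M := ⟨x, hx, rfl⟩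
        rw [hMbot, Subgroup.mem_bot] at hx2
        have : x = 1 := by
          have := congrArg φ.symm hx2
          simpa using this
        simpa [Subgroup.mem_bot] using this
      · intro x hx
        exact (h ▸ hx : x ∈ N).1
    intro φ
    have hβ : ∀ g : G, ∃ h : G, c h = φ (c g) := by
      intro g
      obtain ⟨y, hy, hyg⟩ := hstab φ.symm (⟨g, rfl⟩ : c g ∈ c.range)
      obtain ⟨z, hz⟩ := hy
      refine ⟨z, ?_⟩
      rw [hz, ← hyg]
      simp
    choose β hβspec using hβ
    have hβ' : ∀ g : G, ∃ h : G, c h = φ⁻¹ (c g) := by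
      intro g
      obtain ⟨y, hy, hyg⟩ := hstab φ (⟨g, rfl⟩ : c g ∈ c.range)
      obtain ⟨z, hz⟩ := hy
      refine ⟨z, ?_⟩
      rw [hz, ← hyg]
      simp
    choose β' hβ'spec using hβ'
    have hleft : ∀ g, β' (β g) = g := by
      intro g
      apply cinj
      rw [hβ'spec, hβspec]
      simp
    have hright : ∀ g, β (β' g) = g := by
      intro g
      apply cinj
      rw [hβspec, hβ'spec]
      simp
    have hmul : ∀ g h : G, β (g * h) = β g * β h := by
      intro g h
      apply cinj
      rw [map_mul, hβspec, hβspec, hβspec, map_mul, map_mul]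
    refine ⟨MulEquiv.mk ⟨β, β', hleft, hright⟩ hmul, ?_⟩
    set α : MulAut G := MulEquiv.mk ⟨β, β', hleft, hright⟩ hmul with hα
    have hkey2 : ∀ (σ : MulAut G) (g : G), β (σ g) = (φ σ) (β g) := by
      intro σ g
      apply cinj
      rw [hβspec, ← hconj σ g, map_mul, map_mul, map_inv, ← hβspec, hconj (φ σ) (β g)]
    ext σ x
    show φ σ x = (MulAut.conj α σ) x
    have h1 : (MulAut.conj α σ) x = β (σ (β' x)) := rfl
    rw [h1, hkey2, hright]
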